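/- arXiv:1706.06630 — 3 statements merged into one kernel-verified Lean document; each statement's English description precedes it below -/
import Mathlib

section
/- For every angle β ∈ [β1, β2] ⊆ [0, π/2], the rotation of the vertical strip V = [0,1]×ℝ by angle β about the origin is contained in the butterfly set B(β1, β2). -/
open Real MeasureTheory Set
open scoped ENNReal

noncomputable section

/-- Horizontal strip ℝ × [0,1]. -/
def Hstrip : Set (ℝ × ℝ) := {p | 0 ≤ p.2 ∧ p.2 ≤ 1}

/-- Vertical strip [0,1] × ℝ. -/
def Vstrip : Set (ℝ × ℝ) := {p | 0 ≤ p.1 ∧ p.1 ≤ 1}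

/-- Rotation by θ about the origin. -/
def rot (θ : ℝ) (p : ℝ × ℝ) : ℝ × ℝ :=
  (p.1 * cos θ - p.2 * sin θ, p.1 * sin θ + p.2 * cos θ)

/-- The L-shaped hallway L0 translated by (u,v) then rotated by α about the origin. -/
def Lhall (α u v : ℝ) : Set (ℝ × ℝ) :=
  {p | u ≤ p.1 * cos α + p.2 * sin α ∧ p.1 * cos α + p.2 * sin α ≤ u + 1 ∧
       -p.1 * sin α + p.2 * cos α ≤ v + 1} ∪
  {p | p.1 * cos α + p.2 * sin α ≤ u + 1 ∧ v ≤ -p.1 * sin α + p.2 * cos α ∧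
       -p.1 * sin α + p.2 * cos α ≤ v + 1}

/-- The butterfly set B(β1, β2). -/
def Bfly (β1 β2 : ℝ) : Set (ℝ × ℝ) :=
  {p | 0 ≤ p.1 * cos β1 + p.2 * sin β1 ∧ p.1 * cos β2 + p.2 * sin β2 ≤ 1} ∪
  {p | p.1 * cos β1 + p.2 * sin β1 ≤ 1 ∧ 0 ≤ p.1 * cos β2 + p.2 * sin β2}

/-- λ*(X): supremum of areas of connected components of X. -/
def lamStar (X : Set (ℝ × ℝ)) : ℝ≥0∞ :=
  ⨆ p ∈ X, volume (connectedComponentIn X p)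

theorem stmt1 (β1 β2 β : ℝ) (h1 : 0 ≤ β1) (h2 : β2 ≤ π / 2)
    (hβ : β ∈ Set.Icc β1 β2) :
    rot β '' Vstrip ⊆ Bfly β1 β2 := by
  rintro q ⟨⟨x, y⟩, ⟨hx0, hx1⟩, rfl⟩
  obtain ⟨hβ1, hβ2⟩ := hβ
  have h01 : 0 ≤ β - β1 := by linarith
  have h02 : β - β1 ≤ π / 2 := by linarith
  have h03 : 0 ≤ β2 - β := by linarith
  have h04 : β2 - β ≤ π / 2 := by linarith
  have hpi : (0:ℝ) < π := Real.pi_pos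
  have hc1 : 0 ≤ Real.cos (β - β1) :=
    Real.cos_nonneg_of_mem_Icc ⟨by linarith, h02⟩
  have hs1 : 0 ≤ Real.sin (β - β1) :=
    Real.sin_nonneg_of_nonneg_of_le_pi h01 (by linarith)
  have hc1' : Real.cos (β - β1) ≤ 1 := Real.cos_le_one _
  have hc2 : 0 ≤ Real.cos (β2 - β) :=
    Real.cos_nonneg_of_mem_Icc ⟨by linarith, h04⟩
  have hs2 : 0 ≤ Real.sin (β2 - β) :=
    Real.sin_nonneg_of_nonneg_of_le_pi h03 (by linarith)
  have hc2' : Real.cos (β2 - β) ≤ 1 := Real.cos_le_one _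
  have eq1 : Real.cos (β - β1) = Real.cos β * Real.cos β1 + Real.sin β * Real.sin β1 :=
    Real.cos_sub β β1
  have eq2 : Real.sin (β - β1) = Real.sin β * Real.cos β1 - Real.cos β * Real.sin β1 :=
    Real.sin_sub β β1
  have eq3 : Real.cos (β2 - β) = Real.cos β2 * Real.cos β + Real.sin β2 * Real.sin β :=
    Real.cos_sub β2 β
  have eq4 : Real.sin (β2 - β) = Real.sin β2 * Real.cos β - Real.cos β2 * Real.sin β :=
    Real.sin_sub β2 β
  simp only [Bfly, rot, Set.mem_union, Set.mem_setOf_eq]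
  simp only at hx0 hx1
  rcases le_or_gt 0 y with hy | hy
  · right
    constructor
    · nlinarith [mul_nonneg hy hs1, mul_nonneg hx0 (sub_nonneg.mpr hc1')]
    · nlinarith [mul_nonneg hy hs2, mul_nonneg hx0 hc2]
  · left
    constructor
    · nlinarith [mul_nonneg hx0 hc1, mul_nonneg (le_of_lt (neg_pos.mpr hy)) hs1]
    · nlinarith [mul_nonneg (le_of_lt (neg_pos.mpr hy)) hs2, mul_nonneg hx0 (sub_nonneg.mpr hc2')]
end
end

section
/- For a single angle α ∈ (0, π/2), the quantity G_{(α)} = sup over u ∈ ℝ² of the largest area of a connected component of H ∩ L_α(u) satisfies G_{(α)} = sec α + csc α. -/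
open Real MeasureTheory Set
open scoped ENNReal

noncomputable section

/-- The generic "slab" set: a slanted strip intersected with the horizontal strip. -/
def slab (a₁ a₂ b c : ℝ) : Set (ℝ × ℝ) :=
  {p | (0 ≤ p.2 ∧ p.2 ≤ 1) ∧ a₁ ≤ p.1 * c + p.2 * b ∧ p.1 * c + p.2 * b ≤ a₂}

lemma slab_meas (a₁ a₂ b c : ℝ) : MeasurableSet (slab a₁ a₂ b c) := by
  unfold slab
  apply MeasurableSet.inter
  · exact (measurableSet_le measurable_const measurable_snd).inter
      (measurableSet_le measurable_snd measurable_const)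
  · exact (measurableSet_le measurable_const
        ((measurable_fst.mul measurable_const).add (measurable_snd.mul measurable_const))).inter
      (measurableSet_le
        ((measurable_fst.mul measurable_const).add (measurable_snd.mul measurable_const))
        measurable_const)

lemma slab_vol (a₁ a₂ b c : ℝ) (hc : 0 < c) :
    volume (slab a₁ a₂ b c) = ENNReal.ofReal ((a₂ - a₁) / c) := by
  rw [Measure.volume_eq_prod ℝ ℝ, Measure.prod_apply_symm (slab_meas a₁ a₂ b c)]
  have hslice : ∀ y : ℝ, ((fun x => (x, y)) ⁻¹' slab a₁ a₂ b c) =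
      (if y ∈ Icc (0:ℝ) 1 then Icc ((a₁ - y*b)/c) ((a₂ - y*b)/c) else ∅) := by
    intro y
    by_cases hy : y ∈ Icc (0:ℝ) 1
    · rw [if_pos hy]
      ext x
      simp only [slab, mem_preimage, mem_setOf_eq, mem_Icc]
      constructor
      · rintro ⟨-, h1, h2⟩
        constructor
        · rw [div_le_iff₀ hc]; linarith
        · rw [le_div_iff₀ hc]; linarith
      · rintro ⟨h1, h2⟩
        rw [div_le_iff₀ hc] at h1
        rw [le_div_iff₀ hc] at h2
        exact ⟨⟨hy.1, hy.2⟩, by linarith, by linarith⟩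
    · rw [if_neg hy]
      ext x
      simp only [slab, mem_preimage, mem_setOf_eq, mem_Icc] at *
      simp only [Set.mem_empty_iff_false, iff_false]
      rintro ⟨h, -⟩
      exact hy ⟨h.1, h.2⟩
  calc ∫⁻ y, volume ((fun x => (x, y)) ⁻¹' slab a₁ a₂ b c)
      = ∫⁻ y, Set.indicator (Icc (0:ℝ) 1) (fun _ => ENNReal.ofReal ((a₂ - a₁)/c)) y := by
        apply lintegral_congr
        intro y
        rw [hslice y]
        by_cases hy : y ∈ Icc (0:ℝ) 1
        · rw [if_pos hy, Set.indicator_of_mem hy, Real.volume_Icc]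
          congr 1
          ring
        · rw [if_neg hy, Set.indicator_of_notMem hy, measure_empty]
    _ = ENNReal.ofReal ((a₂ - a₁)/c) := by
        rw [lintegral_indicator_const measurableSet_Icc]
        simp [Real.volume_Icc]

lemma slab_convex (a₁ a₂ b c : ℝ) : Convex ℝ (slab a₁ a₂ b c) := by
  rintro ⟨x1, y1⟩ ⟨⟨hy0, hy1⟩, hA, hB⟩ ⟨x2, y2⟩ ⟨⟨hy0', hy1'⟩, hA', hB'⟩ s t hs ht hst
  simp only [slab, mem_setOf_eq, Prod.smul_mk, Prod.mk_add_mk, smul_eq_mul] at *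
  refine ⟨⟨by nlinarith, by nlinarith⟩, ?_, ?_⟩
  · calc a₁ = s * a₁ + t * a₁ := by linear_combination (-a₁) * hst
      _ ≤ s * (x1 * c + y1 * b) + t * (x2 * c + y2 * b) :=
          add_le_add (mul_le_mul_of_nonneg_left hA hs) (mul_le_mul_of_nonneg_left hA' ht)
      _ = (s * x1 + t * x2) * c + (s * y1 + t * y2) * b := by ring
  · calc (s * x1 + t * x2) * c + (s * y1 + t * y2) * b
        = s * (x1 * c + y1 * b) + t * (x2 * c + y2 * b) := by ring
      _ ≤ s * a₂ + t * a₂ :=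
          add_le_add (mul_le_mul_of_nonneg_left hB hs) (mul_le_mul_of_nonneg_left hB' ht)
      _ = a₂ := by linear_combination a₂ * hst

theorem stmt6 (α : ℝ) (hα : α ∈ Set.Ioo 0 (π / 2)) :
    (⨆ u : ℝ × ℝ, lamStar (Hstrip ∩ Lhall α u.1 u.2)) =
      ENNReal.ofReal (1 / cos α + 1 / sin α) := by
  obtain ⟨hα0, hα1⟩ := hα
  have hc : 0 < cos α := Real.cos_pos_of_mem_Ioo ⟨by linarith [pi_pos], hα1⟩
  have hs : 0 < sin α := Real.sin_pos_of_pos_of_lt_pi hα0 (by linarith [pi_pos])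
  have pyth : sin α ^ 2 + cos α ^ 2 = 1 := sin_sq_add_cos_sq α
  have hcpos : (0:ℝ) ≤ 1 / cos α := by positivity
  have hspos : (0:ℝ) ≤ 1 / sin α := by positivity
  -- the two slab volumes
  have volSa : ∀ u : ℝ, volume (slab u (u+1) (sin α) (cos α)) = ENNReal.ofReal (1 / cos α) := by
    intro u
    rw [slab_vol _ _ _ _ hc]
    congr 1
    ring
  have volSb : ∀ v : ℝ, volume (slab (-(v+1)) (-v) (-(cos α)) (sin α)) =
      ENNReal.ofReal (1 / sin α) := by
    intro v
    rw [slab_vol _ _ _ _ hs]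
    congr 1
    ring
  apply le_antisymm
  · -- Upper bound: every component has volume at most the total volume, which is at most
    -- the sum of the volumes of the two slabs.
    apply iSup_le
    intro u
    have hsub : Hstrip ∩ Lhall α u.1 u.2 ⊆
        slab u.1 (u.1+1) (sin α) (cos α) ∪ slab (-(u.2+1)) (-u.2) (-(cos α)) (sin α) := by
      rintro ⟨x, y⟩ ⟨⟨hy0, hy1⟩, hL⟩
      rcases hL with ⟨h1, h2, -⟩ | ⟨-, h1, h2⟩
      · left; exact ⟨⟨hy0, hy1⟩, h1, h2⟩
      · right
        refine ⟨⟨hy0, hy1⟩, ?_, ?_⟩ <;> nlinarith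
    have hX : volume (Hstrip ∩ Lhall α u.1 u.2) ≤
        ENNReal.ofReal (1 / cos α + 1 / sin α) := by
      calc volume (Hstrip ∩ Lhall α u.1 u.2)
          ≤ volume (slab u.1 (u.1+1) (sin α) (cos α) ∪
              slab (-(u.2+1)) (-u.2) (-(cos α)) (sin α)) := measure_mono hsub
        _ ≤ volume (slab u.1 (u.1+1) (sin α) (cos α)) +
              volume (slab (-(u.2+1)) (-u.2) (-(cos α)) (sin α)) := measure_union_le _ _
        _ = ENNReal.ofReal (1 / cos α) + ENNReal.ofReal (1 / sin α) := by
              rw [volSa, volSb]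
        _ = ENNReal.ofReal (1 / cos α + 1 / sin α) := (ENNReal.ofReal_add hcpos hspos).symm
    apply iSup₂_le
    intro p hp
    exact le_trans (measure_mono (connectedComponentIn_subset _ p)) hX
  · -- Lower bound: at u₀ = (1/sin α, 0) the component through P = (cos α / sin α, 1)
    -- contains two parallelograms meeting only on a line.
    set A : Set (ℝ × ℝ) := slab (1/sin α) (1/sin α + 1) (sin α) (cos α) with hA_def
    set B : Set (ℝ × ℝ) := slab (-1) 0 (-(cos α)) (sin α) with hB_def
    set X₀ : Set (ℝ × ℝ) := Hstrip ∩ Lhall α (1/sin α) 0 with hX₀_def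
    set P : ℝ × ℝ := (cos α / sin α, 1) with hP_def
    have hPval : (cos α / sin α) * cos α + 1 * sin α = 1 / sin α := by
      field_simp
      linear_combination pyth
    have hPA : P ∈ A := by
      refine ⟨⟨zero_le_one, le_refl 1⟩, ?_, ?_⟩ <;> simp only [hP_def] <;> rw [hPval]
      · linarith
    have hPB : P ∈ B := by
      have : (cos α / sin α) * sin α + 1 * (-(cos α)) = 0 := by
        field_simp
        ring
      exact ⟨⟨zero_le_one, le_refl 1⟩, by simp only [hP_def]; rw [this]; norm_num,
        by simp only [hP_def]; rw [this]⟩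
    -- key inequality for A: points of A satisfy -x sin α + y cos α ≤ 0
    have keyA : ∀ x y : ℝ, 1/sin α ≤ x * cos α + y * sin α → y ≤ 1 →
        -x * sin α + y * cos α ≤ 0 := by
      intro x y h1 hy
      have h2 : (1:ℝ) ≤ (x * cos α + y * sin α) * sin α := by
        have := div_mul_cancel₀ (1:ℝ) hs.ne'
        nlinarith [mul_le_mul_of_nonneg_right h1 hs.le]
      have h3 : (-x * sin α + y * cos α) * cos α = y - (x * cos α + y * sin α) * sin α := by
        linear_combination y * pyth
      nlinarith
    -- key inequality for B: points of B satisfy x cos α + y sin α ≤ 1 / sin α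
    have keyB : ∀ x y : ℝ, x * sin α + y * (-(cos α)) ≤ 0 → y ≤ 1 →
        x * cos α + y * sin α ≤ 1 / sin α := by
      intro x y h1 hy
      have h3 : (x * cos α + y * sin α) * sin α = y - (-x * sin α + y * cos α) * cos α := by
        linear_combination y * pyth
      have h4 : (x * cos α + y * sin α) * sin α ≤ 1 := by nlinarith
      rw [← div_mul_cancel₀ (1:ℝ) hs.ne'] at h4
      exact le_of_mul_le_mul_right h4 hs
    have hA_sub : A ⊆ X₀ := by
      rintro ⟨x, y⟩ ⟨⟨hy0, hy1⟩, h1, h2⟩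
      refine ⟨⟨hy0, hy1⟩, Or.inl ⟨h1, h2, ?_⟩⟩
      have := keyA x y h1 hy1
      linarith
    have hB_sub : B ⊆ X₀ := by
      rintro ⟨x, y⟩ ⟨⟨hy0, hy1⟩, h1, h2⟩
      refine ⟨⟨hy0, hy1⟩, Or.inr ⟨?_, ?_, ?_⟩⟩
      · have := keyB x y h2 hy1
        linarith
      · nlinarith
      · nlinarith
    -- the intersection is contained in a line, hence null
    have hABnull : volume (A ∩ B) = 0 := by
      have hsub : A ∩ B ⊆ slab (1/sin α) (1/sin α) (sin α) (cos α) := by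
        rintro ⟨x, y⟩ ⟨⟨⟨hy0, hy1⟩, h1, -⟩, ⟨-, -, h2'⟩⟩
        exact ⟨⟨hy0, hy1⟩, h1, keyB x y h2' hy1⟩
      refine measure_mono_null hsub ?_
      rw [slab_vol _ _ _ _ hc]
      simp
    have hunion : volume (A ∪ B) = ENNReal.ofReal (1 / cos α + 1 / sin α) := by
      rw [measure_union₀ (slab_meas _ _ _ _).nullMeasurableSet hABnull]
      rw [volSa (1/sin α)]
      have : volume (slab (-1) 0 (-(cos α)) (sin α)) = ENNReal.ofReal (1 / sin α) := by
        have := volSb 0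
        simpa using this
      rw [this, ← ENNReal.ofReal_add hcpos hspos]
    have hconn : IsPreconnected (A ∪ B) :=
      IsPreconnected.union P hPA hPB (slab_convex _ _ _ _).isPreconnected
        (slab_convex _ _ _ _).isPreconnected
    have hPX : P ∈ X₀ := hA_sub hPA
    have hcc : A ∪ B ⊆ connectedComponentIn X₀ P :=
      hconn.subset_connectedComponentIn (mem_union_left _ hPA)
        (union_subset hA_sub hB_sub)
    calc ENNReal.ofReal (1 / cos α + 1 / sin α)
        = volume (A ∪ B) := hunion.symm
      _ ≤ volume (connectedComponentIn X₀ P) := measure_mono hcc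
      _ ≤ ⨆ p ∈ X₀, volume (connectedComponentIn X₀ p) := le_biSup (fun p => volume (connectedComponentIn X₀ p)) hPX
      _ = lamStar (Hstrip ∩ Lhall α (1/sin α, (0:ℝ)).1 (1/sin α, (0:ℝ)).2) := rfl
      _ ≤ ⨆ u : ℝ × ℝ, lamStar (Hstrip ∩ Lhall α u.1 u.2) :=
          le_iSup (fun u : ℝ × ℝ => lamStar (Hstrip ∩ Lhall α u.1 u.2)) (1/sin α, 0)
end
end

section
/- Let S be a bounded measurable subset of ℝ² that is contained, for every t ∈ [0, β], in a translate of the set R_t(L0), where L0 = ((-∞,1]×[0,1]) ∪ ([0,1]×(-∞,1]) and R_t is rotation by t about the origin. Then for any finite sequence 0 < α1 < … < αk ≤ β, the area of S is at most sup over u1,…,uk ∈ ℝ² of λ(H ∩ ⋂_{j=1}^k L_{αj}(uj)), where H = ℝ×[0,1], provided S ⊆ H. -/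
open Real MeasureTheory Set
open scoped ENNReal

noncomputable section

theorem stmt8 (S : Set (ℝ × ℝ)) (hSb : Bornology.IsBounded S) (hSm : MeasurableSet S)
    (hSH : S ⊆ Hstrip) (β : ℝ)
    (hfit : ∀ t ∈ Set.Icc 0 β, ∃ u v : ℝ, S ⊆ Lhall t u v)
    (k : ℕ) (α : Fin k → ℝ) (hmono : StrictMono α)
    (hpos : ∀ j, 0 < α j) (hle : ∀ j, α j ≤ β) :
    volume S ≤
      ⨆ u : Fin k → ℝ × ℝ,
        volume (Hstrip ∩ ⋂ j, Lhall (α j) (u j).1 (u j).2) := by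
  have h : ∀ j : Fin k, ∃ w : ℝ × ℝ, S ⊆ Lhall (α j) w.1 w.2 := by
    intro j
    obtain ⟨u, v, hu⟩ := hfit (α j) ⟨(hpos j).le, hle j⟩
    exact ⟨(u, v), hu⟩
  choose w hw using h
  refine le_trans ?_ (le_iSup _ w)
  exact measure_mono (subset_inter hSH (Set.subset_iInter hw))
end
end
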